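/- arXiv:1805.08460 — 2 statements merged into one kernel-verified Lean document; each statement's English description precedes it below -/
import Mathlib

section
/- Let q : ℝ^{D₁} × ⋯ × ℝ^{D_n} → ℝ be differentiable with block-coordinate Lipschitz gradient: for each i and all Λ and block perturbations δᵢ ∈ ℝ^{Dᵢ}, ‖∇_i q(Λ + Uᵢδᵢ) - ∇_i q(Λ)‖ ≤ Lᵢ‖δᵢ‖, where Uᵢ embeds the i-th block. Then for any Λ and any full perturbation δ = (δ₁,…,δ_n), q(Λ + δ) ≥ q(Λ) + ⟨∇q(Λ), δ⟩ - (n/2) Σᵢ Lᵢ ‖δᵢ‖², assuming q is concave. -/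
open scoped RealInnerProductSpace

theorem aux_inner (n : ℕ) (D : Fin n → ℕ) (i : Fin n)
    (g : PiLp 2 (fun i : Fin n => EuclideanSpace ℝ (Fin (D i))))
    (h : EuclideanSpace ℝ (Fin (D i))) :
    ⟪g, (WithLp.equiv 2 ((j : Fin n) → EuclideanSpace ℝ (Fin (D j)))).symm (Pi.single i h)⟫
      = ⟪g i, h⟫ := by
  rw [PiLp.inner_apply, Finset.sum_eq_single i]
  · simp
  · intro j _ hj; simp [Pi.single_eq_of_ne hj]
  · simp

theorem aux_deriv (n : ℕ) (D : Fin n → ℕ)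
    (q : PiLp 2 (fun i : Fin n => EuclideanSpace ℝ (Fin (D i))) → ℝ)
    (hdiff : Differentiable ℝ q)
    (x v : PiLp 2 (fun i : Fin n => EuclideanSpace ℝ (Fin (D i)))) (t : ℝ) :
    HasDerivAt (fun t : ℝ => q (x + t • v)) ⟪gradient q (x + t • v), v⟫ t := by
  have hf : HasFDerivAt q ((InnerProductSpace.toDual ℝ _) (gradient q (x + t • v))) (x + t • v) :=
    (hdiff (x + t • v)).hasGradientAt.hasFDerivAt
  have hline : HasDerivAt (fun t : ℝ => x + t • v) v t := by
    simpa using ((hasDerivAt_id t).smul_const v).const_add x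
  have h := hf.comp_hasDerivAt t hline
  rw [InnerProductSpace.toDual_apply_apply] at h
  exact h

theorem aux_block (n : ℕ) (D : Fin n → ℕ)
    (q : PiLp 2 (fun i : Fin n => EuclideanSpace ℝ (Fin (D i))) → ℝ)
    (Li : ℝ) (hLi : 0 < Li) (hdiff : Differentiable ℝ q) (i : Fin n)
    (hb : ∀ (Λ : PiLp 2 (fun i : Fin n => EuclideanSpace ℝ (Fin (D i))))
        (δi : EuclideanSpace ℝ (Fin (D i))),
      ‖gradient q (Λ + (WithLp.equiv 2 ((j : Fin n) → EuclideanSpace ℝ (Fin (D j)))).symm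
          (Pi.single i δi)) i - gradient q Λ i‖ ≤ Li * ‖δi‖)
    (x : PiLp 2 (fun i : Fin n => EuclideanSpace ℝ (Fin (D i))))
    (h : EuclideanSpace ℝ (Fin (D i))) :
    q x + ⟪gradient q x i, h⟫ - Li / 2 * ‖h‖ ^ 2 ≤
      q (x + (WithLp.equiv 2 ((j : Fin n) → EuclideanSpace ℝ (Fin (D j)))).symm
          (Pi.single i h)) := by
  set v : PiLp 2 (fun i : Fin n => EuclideanSpace ℝ (Fin (D i))) :=
    (WithLp.equiv 2 ((j : Fin n) → EuclideanSpace ℝ (Fin (D j)))).symm (Pi.single i h) with hv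
  have hsmul : ∀ t : ℝ, t • v =
      (WithLp.equiv 2 ((j : Fin n) → EuclideanSpace ℝ (Fin (D j)))).symm
        (Pi.single i (t • h)) := by
    intro t
    rw [hv, Pi.single_smul]; rfl
  set c : ℝ := ⟪gradient q x i, h⟫ with hc
  set φ : ℝ → ℝ := fun t => q (x + t • v) - c * t + Li / 2 * ‖h‖ ^ 2 * t ^ 2 with hφ
  have hder : ∀ t : ℝ, HasDerivAt φ
      (⟪gradient q (x + t • v) i, h⟫ - c + Li / 2 * ‖h‖ ^ 2 * (2 * t)) t := by
    intro t
    have h1 := aux_deriv n D q hdiff x v t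
    rw [show ⟪gradient q (x + t • v), v⟫ = ⟪gradient q (x + t • v) i, h⟫ from
      aux_inner n D i _ h] at h1
    have h2 : HasDerivAt (fun t : ℝ => c * t) c t := by
      simpa using (hasDerivAt_id t).const_mul c
    have h3 : HasDerivAt (fun t : ℝ => Li / 2 * ‖h‖ ^ 2 * t ^ 2)
        (Li / 2 * ‖h‖ ^ 2 * (2 * t)) t := by
      simpa [mul_comm, mul_assoc, mul_left_comm] using
        (hasDerivAt_pow 2 t).const_mul (Li / 2 * ‖h‖ ^ 2)
    exact (h1.sub h2).add h3
  have hmono : MonotoneOn φ (Set.Icc (0:ℝ) 1) := by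
    apply monotoneOn_of_deriv_nonneg (convex_Icc 0 1)
    · exact fun t _ => ((hder t).continuousAt).continuousWithinAt
    · exact fun t _ => ((hder t).differentiableAt).differentiableWithinAt
    · intro t ht
      rw [interior_Icc] at ht
      rw [(hder t).deriv]
      have hgap : ‖gradient q (x + t • v) i - gradient q x i‖ ≤ Li * (t * ‖h‖) := by
        have := hb x (t • h)
        rw [← hsmul t] at this
        simpa [norm_smul, abs_of_pos ht.1, mul_assoc] using this
      have hinner : -(Li * (t * ‖h‖)) * ‖h‖ ≤ ⟪gradient q (x + t • v) i, h⟫ - c := by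
        rw [hc, ← inner_sub_left]
        have h1 := abs_real_inner_le_norm (gradient q (x + t • v) i - gradient q x i) h
        have h2 : ‖gradient q (x + t • v) i - gradient q x i‖ * ‖h‖ ≤ Li * (t * ‖h‖) * ‖h‖ :=
          mul_le_mul_of_nonneg_right hgap (norm_nonneg _)
        nlinarith [neg_abs_le (⟪gradient q (x + t • v) i - gradient q x i, h⟫ : ℝ)]
      nlinarith
  have h01 : φ 0 ≤ φ 1 := hmono (by norm_num) (by norm_num) (by norm_num)
  simp only [hφ] at h01
  rw [hv]
  simp only [zero_smul, one_smul, add_zero] at h01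
  nlinarith [h01]

theorem aux_single_smul (n : ℕ) (D : Fin n → ℕ) (i : Fin n)
    (t : ℝ) (h : EuclideanSpace ℝ (Fin (D i))) :
    (WithLp.equiv 2 ((j : Fin n) → EuclideanSpace ℝ (Fin (D j)))).symm (Pi.single i (t • h))
      = t • (WithLp.equiv 2 ((j : Fin n) → EuclideanSpace ℝ (Fin (D j)))).symm (Pi.single i h) := by
  rw [Pi.single_smul]; rfl

theorem aux_sum_single (n : ℕ) (D : Fin n → ℕ)
    (δ : PiLp 2 (fun i : Fin n => EuclideanSpace ℝ (Fin (D i)))) :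
    ∑ i, (WithLp.equiv 2 ((j : Fin n) → EuclideanSpace ℝ (Fin (D j)))).symm
        (Pi.single i (δ i)) = δ := by
  set e := WithLp.linearEquiv 2 ℝ ((j : Fin n) → EuclideanSpace ℝ (Fin (D j))) with he
  have : ∀ i, (WithLp.equiv 2 ((j : Fin n) → EuclideanSpace ℝ (Fin (D j)))).symm
      (Pi.single i (δ i)) = e.symm (Pi.single i (δ i)) := fun i => rfl
  simp_rw [this, ← map_sum]
  have : ∑ i, Pi.single i (δ i) = (fun j => δ j) := by
    exact Finset.univ_sum_single (fun j => δ j)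
  rw [this]
  rfl

theorem stmt8 (n : ℕ) (D : Fin n → ℕ)
    (q : PiLp 2 (fun i : Fin n => EuclideanSpace ℝ (Fin (D i))) → ℝ)
    (L : Fin n → ℝ) (hL : ∀ i, 0 < L i)
    (hconc : ConcaveOn ℝ Set.univ q) (hdiff : Differentiable ℝ q)
    (hblock : ∀ (i : Fin n) (Λ : PiLp 2 (fun i : Fin n => EuclideanSpace ℝ (Fin (D i))))
        (δi : EuclideanSpace ℝ (Fin (D i))),
      ‖gradient q (Λ + (WithLp.equiv 2 ((j : Fin n) → EuclideanSpace ℝ (Fin (D j)))).symm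
          (Pi.single i δi)) i - gradient q Λ i‖ ≤ L i * ‖δi‖) :
    ∀ Λ δ : PiLp 2 (fun i : Fin n => EuclideanSpace ℝ (Fin (D i))),
      q (Λ + δ) ≥ q Λ + ⟪gradient q Λ, δ⟫ - (n / 2 : ℝ) * ∑ i, L i * ‖δ i‖ ^ 2 := by
  intro Λ δ
  rcases Nat.eq_zero_or_pos n with hn | hn
  · subst hn
    have hδ : δ = 0 := Subsingleton.elim δ 0
    subst hδ
    simp [PiLp.inner_apply]
  · have hn' : (n : ℝ) ≠ 0 := Nat.cast_ne_zero.mpr hn.ne'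
    set U : ∀ i : Fin n, EuclideanSpace ℝ (Fin (D i)) →
        PiLp 2 (fun i : Fin n => EuclideanSpace ℝ (Fin (D i))) :=
      fun i h => (WithLp.equiv 2 ((j : Fin n) → EuclideanSpace ℝ (Fin (D j)))).symm
        (Pi.single i h) with hU
    set p : Fin n → PiLp 2 (fun i : Fin n => EuclideanSpace ℝ (Fin (D i))) :=
      fun i => Λ + (n : ℝ) • U i (δ i) with hp
    have jensen := hconc.le_map_sum (t := Finset.univ) (w := fun _ => (1 : ℝ) / n) (p := p)
      (fun i _ => by positivity) (by simp [Finset.card_univ]; field_simp)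
      (fun i _ => Set.mem_univ _)
    have hsum : ∑ i, ((1 : ℝ) / n) • p i = Λ + δ := by
      simp only [hp, smul_add, Finset.sum_add_distrib, smul_smul]
      rw [Finset.sum_const, Finset.card_univ, Fintype.card_fin]
      congr 1
      · rw [← Nat.cast_smul_eq_nsmul ℝ]
        rw [smul_smul]
        field_simp
        simp
      · have : (1 : ℝ) / n * n = 1 := by field_simp
        simp_rw [this, one_smul]
        exact aux_sum_single n D δ
    rw [hsum] at jensen
    -- lower bound each q (p i)
    have hpe : ∀ i, q Λ + (n : ℝ) * ⟪gradient q Λ i, δ i⟫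
        - L i / 2 * ((n : ℝ) ^ 2 * ‖δ i‖ ^ 2) ≤ q (p i) := by
      intro i
      have := aux_block n D q (L i) (hL i) hdiff i (hblock i) Λ ((n : ℝ) • δ i)
      rw [aux_single_smul] at this
      calc q Λ + (n : ℝ) * ⟪gradient q Λ i, δ i⟫ - L i / 2 * ((n : ℝ) ^ 2 * ‖δ i‖ ^ 2)
          = q Λ + ⟪gradient q Λ i, (n : ℝ) • δ i⟫ - L i / 2 * ‖(n : ℝ) • δ i‖ ^ 2 := by
            rw [real_inner_smul_right, norm_smul]
            simp [mul_pow, abs_of_nonneg (Nat.cast_nonneg n : (0:ℝ) ≤ n)]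
        _ ≤ q (Λ + (n : ℝ) • U i (δ i)) := this
        _ = q (p i) := rfl
    have hsum2 : q Λ + (∑ i, ⟪gradient q Λ i, δ i⟫) - (n / 2 : ℝ) * ∑ i, L i * ‖δ i‖ ^ 2
        ≤ ∑ i, ((1 : ℝ) / n) • q (p i) := by
      have : ∀ i ∈ Finset.univ, ((1 : ℝ) / n) *
          (q Λ + (n : ℝ) * ⟪gradient q Λ i, δ i⟫ - L i / 2 * ((n : ℝ) ^ 2 * ‖δ i‖ ^ 2))
          ≤ ((1 : ℝ) / n) • q (p i) := by
        intro i _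
        rw [smul_eq_mul]
        apply mul_le_mul_of_nonneg_left (hpe i) (by positivity)
      calc q Λ + (∑ i, ⟪gradient q Λ i, δ i⟫) - (n / 2 : ℝ) * ∑ i, L i * ‖δ i‖ ^ 2
          = ∑ i, ((1 : ℝ) / n) *
            (q Λ + (n : ℝ) * ⟪gradient q Λ i, δ i⟫ - L i / 2 * ((n : ℝ) ^ 2 * ‖δ i‖ ^ 2)) := by
            simp only [mul_sub, mul_add, Finset.sum_sub_distrib, Finset.sum_add_distrib,
              Finset.sum_const, Finset.card_univ, Fintype.card_fin, nsmul_eq_mul,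
              Finset.mul_sum]
            congr 1
            · congr 1
              · field_simp
              · apply Finset.sum_congr rfl; intro i _; field_simp
            · apply Finset.sum_congr rfl; intro i _; field_simp
        _ ≤ ∑ i, ((1 : ℝ) / n) • q (p i) := Finset.sum_le_sum this
    have hinner : ⟪gradient q Λ, δ⟫ = ∑ i, ⟪gradient q Λ i, δ i⟫ := PiLp.inner_apply _ _
    rw [ge_iff_le, hinner]
    exact le_trans hsum2 jensen
end

section
/- Let q : ℝ^{D₁} × ⋯ × ℝ^{D_n} → ℝ be concave, differentiable, with block-Lipschitz gradient constants Lᵢ, attaining maximum q*. Consider the randomized block-coordinate ascent: at each iteration t, a block iₜ is chosen uniformly at random and Λ_{iₜ}(t+1) = Λ_{iₜ}(t) + (1/L_{iₜ})∇_{iₜ}q(Λ(t)), other blocks unchanged. Then the expected optimality gap satisfies E[q* - q(Λ(t+1)) | Λ(t)] ≤ q* - q(Λ(t)) - (1/(2n)) Σᵢ (1/Lᵢ)‖∇_i q(Λ(t))‖², i.e., each step decreases the expected gap by at least (1/(2n)) times the weighted squared gradient norm. -/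
open scoped RealInnerProductSpace

lemma aux_descent {E : Type*} [NormedAddCommGroup E] [InnerProductSpace ℝ E] [CompleteSpace E]
    (q : E → ℝ) (hdiff : Differentiable ℝ q) (Λ v : E) (L : ℝ) (hL : 0 ≤ L)
    (h : ∀ s t : ℝ, |⟪gradient q (Λ + t • v) - gradient q (Λ + s • v), v⟫| ≤ L * |t - s| * ‖v‖ ^ 2) :
    q Λ + ⟪gradient q Λ, v⟫ - L / 2 * ‖v‖ ^ 2 ≤ q (Λ + v) := by
  set f' : ℝ → ℝ := fun t => ⟪gradient q (Λ + t • v), v⟫ with hf'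
  have hlip : LipschitzWith (L * ‖v‖ ^ 2).toNNReal f' := by
    apply LipschitzWith.of_dist_le_mul
    intro t s
    rw [Real.coe_toNNReal _ (by positivity), Real.dist_eq]
    have := h s t
    rw [inner_sub_left] at this
    calc |f' t - f' s| ≤ L * |t - s| * ‖v‖ ^ 2 := this
      _ = L * ‖v‖ ^ 2 * dist t s := by rw [Real.dist_eq]; ring
  have hcont : Continuous f' := hlip.continuous
  have hderiv : ∀ t : ℝ, HasDerivAt (fun t : ℝ => q (Λ + t • v)) (f' t) t := by
    intro t
    have hc : HasDerivAt (fun t : ℝ => Λ + t • v) v t := by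
      simpa using (hasDerivAt_id t).smul_const v
    have hg : HasGradientAt q (gradient q (Λ + t • v)) (Λ + t • v) :=
      (hdiff (Λ + t • v)).hasGradientAt
    have := hg.hasFDerivAt.comp_hasDerivAt t hc
    simpa [InnerProductSpace.toDual_apply_apply, hf', gradient, InnerProductSpace.toDual_symm_apply, Function.comp_def] using this
  have hint : IntervalIntegrable f' MeasureTheory.volume 0 1 :=
    hcont.intervalIntegrable 0 1
  have hftc : ∫ t in (0:ℝ)..1, f' t = q (Λ + v) - q Λ := by
    have := intervalIntegral.integral_eq_sub_of_hasDerivAt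
      (f := fun t : ℝ => q (Λ + t • v)) (f' := f') (a := 0) (b := 1)
      (fun t _ => hderiv t) hint
    simpa using this
  have hlb : ∀ t ∈ Set.Icc (0:ℝ) 1, f' 0 - L * ‖v‖ ^ 2 * t ≤ f' t := by
    intro t ht
    have := h 0 t
    rw [inner_sub_left] at this
    have habs : |f' t - f' 0| ≤ L * ‖v‖ ^ 2 * t := by
      calc |f' t - f' 0| ≤ L * |t - 0| * ‖v‖ ^ 2 := this
        _ = L * ‖v‖ ^ 2 * t := by rw [sub_zero, abs_of_nonneg ht.1]; ring
    linarith [(abs_le.mp habs).1]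
  have hmono : ∫ t in (0:ℝ)..1, (f' 0 - L * ‖v‖ ^ 2 * t) ≤ ∫ t in (0:ℝ)..1, f' t := by
    apply intervalIntegral.integral_mono_on (by norm_num)
    · exact ((continuous_const.sub (continuous_const.mul continuous_id)).intervalIntegrable 0 1)
    · exact hint
    · intro t ht; exact hlb t ht
  have hcomp : ∫ t in (0:ℝ)..1, (f' 0 - L * ‖v‖ ^ 2 * t) = f' 0 - L / 2 * ‖v‖ ^ 2 := by
    rw [intervalIntegral.integral_sub (intervalIntegrable_const)
      (intervalIntegral.intervalIntegrable_id.const_mul _),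
      intervalIntegral.integral_const_mul, integral_id]
    simp
    ring
  have h0 : f' 0 = ⟪gradient q Λ, v⟫ := by simp [hf']
  rw [hcomp, h0] at hmono
  rw [hftc] at hmono
  linarith


lemma inner_single_piLp {n : ℕ} (D : Fin n → ℕ) (i : Fin n)
    (δ : EuclideanSpace ℝ (Fin (D i)))
    (x : PiLp 2 (fun j : Fin n => EuclideanSpace ℝ (Fin (D j)))) :
    ⟪x, (WithLp.equiv 2 ((j : Fin n) → EuclideanSpace ℝ (Fin (D j)))).symm (Pi.single i δ)⟫
      = ⟪x i, δ⟫ := by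
  rw [PiLp.inner_apply]
  rw [Finset.sum_eq_single i]
  · simp [WithLp.equiv_symm_apply]
  · intro j _ hj
    simp [WithLp.equiv_symm_apply, Pi.single_eq_of_ne hj]
  · intro hi; exact absurd (Finset.mem_univ i) hi

lemma smul_single_piLp {n : ℕ} (D : Fin n → ℕ) (i : Fin n)
    (δ : EuclideanSpace ℝ (Fin (D i))) (t : ℝ) :
    t • (WithLp.equiv 2 ((j : Fin n) → EuclideanSpace ℝ (Fin (D j)))).symm (Pi.single i δ)
      = (WithLp.equiv 2 ((j : Fin n) → EuclideanSpace ℝ (Fin (D j)))).symm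
          (Pi.single i (t • δ)) := by
  rw [WithLp.equiv_symm_apply, ← WithLp.toLp_smul, Pi.single_smul]

lemma add_single_piLp {n : ℕ} (D : Fin n → ℕ) (i : Fin n)
    (δ₁ δ₂ : EuclideanSpace ℝ (Fin (D i))) :
    (WithLp.equiv 2 ((j : Fin n) → EuclideanSpace ℝ (Fin (D j)))).symm (Pi.single i δ₁)
      + (WithLp.equiv 2 ((j : Fin n) → EuclideanSpace ℝ (Fin (D j)))).symm (Pi.single i δ₂)
      = (WithLp.equiv 2 ((j : Fin n) → EuclideanSpace ℝ (Fin (D j)))).symm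
          (Pi.single i (δ₁ + δ₂)) := by
  rw [WithLp.equiv_symm_apply, ← WithLp.toLp_add, Pi.single_add]

lemma norm_single_piLp {n : ℕ} (D : Fin n → ℕ) (i : Fin n)
    (δ : EuclideanSpace ℝ (Fin (D i))) :
    ‖(WithLp.equiv 2 ((j : Fin n) → EuclideanSpace ℝ (Fin (D j)))).symm (Pi.single i δ)‖
      = ‖δ‖ := by
  simp

set_option maxHeartbeats 1000000 in
theorem stmt17 (n : ℕ) (hn : 0 < n) (D : Fin n → ℕ)
    (q : PiLp 2 (fun i : Fin n => EuclideanSpace ℝ (Fin (D i))) → ℝ)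
    (L : Fin n → ℝ) (hL : ∀ i, 0 < L i)
    (hconc : ConcaveOn ℝ Set.univ q) (hdiff : Differentiable ℝ q)
    (hblock : ∀ (i : Fin n) (Λ : PiLp 2 (fun i : Fin n => EuclideanSpace ℝ (Fin (D i))))
        (δi : EuclideanSpace ℝ (Fin (D i))),
      ‖gradient q (Λ + (WithLp.equiv 2 ((j : Fin n) → EuclideanSpace ℝ (Fin (D j)))).symm
          (Pi.single i δi)) i - gradient q Λ i‖ ≤ L i * ‖δi‖)
    (qstar : ℝ) (Λstar : PiLp 2 (fun i : Fin n => EuclideanSpace ℝ (Fin (D i))))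
    (hmax : ∀ y, q y ≤ q Λstar) (hq : qstar = q Λstar) :
    ∀ Λ : PiLp 2 (fun i : Fin n => EuclideanSpace ℝ (Fin (D i))),
      (1 / n : ℝ) * ∑ i, (qstar -
          q (Λ + (WithLp.equiv 2 ((j : Fin n) → EuclideanSpace ℝ (Fin (D j)))).symm
              (Pi.single i ((1 / L i) • gradient q Λ i)))) ≤
        (qstar - q Λ) - (1 / (2 * n) : ℝ) * ∑ i, (1 / L i) * ‖gradient q Λ i‖ ^ 2 := by
  intro Λ
  -- the main per-block descent estimate
  have key : ∀ i : Fin n,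
      qstar - q (Λ + (WithLp.equiv 2 ((j : Fin n) → EuclideanSpace ℝ (Fin (D j)))).symm
          (Pi.single i ((1 / L i) • gradient q Λ i))) ≤
        (qstar - q Λ) - (1 / (2 * L i)) * ‖gradient q Λ i‖ ^ 2 := by
    intro i
    have hLi := hL i
    set δ : EuclideanSpace ℝ (Fin (D i)) := (1 / L i) • gradient q Λ i with hδ
    set v := (WithLp.equiv 2 ((j : Fin n) → EuclideanSpace ℝ (Fin (D j)))).symm
      (Pi.single i δ) with hv
    have hnormv : ‖v‖ = ‖δ‖ := norm_single_piLp D i δ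
    have hlipbound : ∀ s t : ℝ,
        |⟪gradient q (Λ + t • v) - gradient q (Λ + s • v), v⟫| ≤ L i * |t - s| * ‖v‖ ^ 2 := by
      intro s t
      have h1 : Λ + t • v = (Λ + s • v) +
          (WithLp.equiv 2 ((j : Fin n) → EuclideanSpace ℝ (Fin (D j)))).symm
            (Pi.single i ((t - s) • δ)) := by
        rw [← smul_single_piLp, ← hv]
        module
      have h2 := hblock i (Λ + s • v) ((t - s) • δ)
      rw [← h1] at h2
      have h3 : ⟪gradient q (Λ + t • v) - gradient q (Λ + s • v), v⟫
          = ⟪gradient q (Λ + t • v) i - gradient q (Λ + s • v) i, δ⟫ := by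
        rw [hv, inner_single_piLp]; rfl
      rw [h3]
      calc |⟪gradient q (Λ + t • v) i - gradient q (Λ + s • v) i, δ⟫|
          ≤ ‖gradient q (Λ + t • v) i - gradient q (Λ + s • v) i‖ * ‖δ‖ :=
            abs_real_inner_le_norm _ _
        _ ≤ (L i * ‖(t - s) • δ‖) * ‖δ‖ :=
            mul_le_mul_of_nonneg_right h2 (norm_nonneg _)
        _ = L i * |t - s| * ‖v‖ ^ 2 := by
            rw [norm_smul, hnormv, Real.norm_eq_abs]; ring
    have hdesc := aux_descent q hdiff Λ v (L i) hLi.le hlipbound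
    have hgv : ⟪gradient q Λ, v⟫ = (1 / L i) * ‖gradient q Λ i‖ ^ 2 := by
      rw [hv, inner_single_piLp, hδ, real_inner_smul_right, real_inner_self_eq_norm_sq]
    have hnv : ‖v‖ ^ 2 = (1 / L i) ^ 2 * ‖gradient q Λ i‖ ^ 2 := by
      rw [hnormv, hδ, norm_smul, mul_pow, Real.norm_eq_abs,
        abs_of_pos (by positivity : (0:ℝ) < 1 / L i)]
    rw [hgv, hnv] at hdesc
    have harith : q Λ + 1 / L i * ‖gradient q Λ i‖ ^ 2
          - L i / 2 * ((1 / L i) ^ 2 * ‖gradient q Λ i‖ ^ 2)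
        = q Λ + (1 / (2 * L i)) * ‖gradient q Λ i‖ ^ 2 := by
      field_simp
      ring
    rw [harith] at hdesc
    linarith
  -- sum up
  have hsum : ∑ i, (qstar -
        q (Λ + (WithLp.equiv 2 ((j : Fin n) → EuclideanSpace ℝ (Fin (D j)))).symm
            (Pi.single i ((1 / L i) • gradient q Λ i)))) ≤
      ∑ i, ((qstar - q Λ) - (1 / (2 * L i)) * ‖gradient q Λ i‖ ^ 2) :=
    Finset.sum_le_sum fun i _ => key i
  have hN : (0:ℝ) < (n:ℝ) := by exact_mod_cast hn
  have hnn : (0:ℝ) ≤ 1 / (n:ℝ) := by positivity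
  calc (1 / n : ℝ) * ∑ i, (qstar -
        q (Λ + (WithLp.equiv 2 ((j : Fin n) → EuclideanSpace ℝ (Fin (D j)))).symm
            (Pi.single i ((1 / L i) • gradient q Λ i))))
      ≤ (1 / n : ℝ) * ∑ i, ((qstar - q Λ) - (1 / (2 * L i)) * ‖gradient q Λ i‖ ^ 2) :=
        mul_le_mul_of_nonneg_left hsum hnn
    _ = (qstar - q Λ) - (1 / (2 * n) : ℝ) * ∑ i, (1 / L i) * ‖gradient q Λ i‖ ^ 2 := by
        rw [Finset.sum_sub_distrib, Finset.sum_const, Finset.card_univ, Fintype.card_fin]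
        have h2 : ∑ i, (1 / (2 * L i)) * ‖gradient q Λ i‖ ^ 2
            = (1 / 2) * ∑ i, (1 / L i) * ‖gradient q Λ i‖ ^ 2 := by
          rw [Finset.mul_sum]
          refine Finset.sum_congr rfl fun i _ => ?_
          have := (hL i).ne'
          field_simp
        rw [h2, mul_sub, nsmul_eq_mul]
        have hc : (1 / n : ℝ) * ((n:ℝ) * (qstar - q Λ)) = qstar - q Λ := by
          field_simp
        rw [hc]
        congr 1
        rw [← mul_assoc]
        congr 1
        field_simp
end
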